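/- The two-dimensional vector field f₀ : ℝ² → ℝ² given by f₀(x) = 2x(‖x‖² − 0.25) if ‖x‖ ≤ 0.5 and f₀(x) = x(1 − 1/(2‖x‖)) if ‖x‖ > 0.5, is Lipschitz continuous on the square X = [−0.8, 0.8]² with Lipschitz constant 1. -/

import Mathlib

open RealInnerProductSpace

/-- The two-dimensional example dynamics of the paper:
`f₀(x) = 2x(‖x‖² − 0.25)` if `‖x‖ ≤ 0.5` and `f₀(x) = x(1 − 1/(2‖x‖))` otherwise. -/
noncomputable def f0 (x : EuclideanSpace ℝ (Fin 2)) : EuclideanSpace ℝ (Fin 2) :=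
  if ‖x‖ ≤ 0.5 then (2 * (‖x‖ ^ 2 - 0.25)) • x
  else (1 - 1 / (2 * ‖x‖)) • x

private theorem f0_key (a b : EuclideanSpace ℝ (Fin 2)) (α β : ℝ)
    (h : α^2*‖a‖^2 + β^2*‖b‖^2 - 2*(α*β)*⟪a,b⟫ ≤ ‖a‖^2 + ‖b‖^2 - 2*⟪a,b⟫) :
    ‖α • a - β • b‖ ≤ ‖a - b‖ := by
  have h1 := norm_sub_sq_real (α • a) (β • b)
  have h2 := norm_sub_sq_real a b
  rw [norm_smul, norm_smul, real_inner_smul_left, real_inner_smul_right] at h1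
  have hsq : ‖α • a - β • b‖^2 ≤ ‖a - b‖^2 := by
    rw [h1, h2]
    rw [mul_pow, mul_pow, Real.norm_eq_abs, Real.norm_eq_abs, sq_abs, sq_abs]
    nlinarith [h]
  nlinarith [norm_nonneg (α • a - β • b), norm_nonneg (a - b), hsq]

private theorem f0_aux1 (a b : ℝ) (h1 : 0 ≤ a) (h2 : 0 ≤ b) (h3 : a ≤ 1/2) (h4 : b ≤ 1/2) :
    0 ≤ 6*(a+b) - 13*(a^2+b^2) - 22*a*b + 12*(a^3+b^3) + 24*(a^2*b+a*b^2)
      - 4*(a^4+b^4) - 8*(a^3*b+a*b^3) - 12*a^2*b^2 := by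
  have hp0 : 0 ≤ a*b := mul_nonneg h1 h2
  have hT1 : 0 ≤ (a+b)*(1-(a+b))*((2*(a+b)-2)^2+1) :=
    mul_nonneg (mul_nonneg (by linarith) (by linarith)) (by positivity)
  have hT2 : 0 ≤ (a*b)*(8*(a+b)^2-12*(a+b)+9/2) :=
    mul_nonneg hp0 (by nlinarith [sq_nonneg (2*(a+b)-3/2)])
  have h4p : 0 ≤ (a*b)*(1/4-a*b) := mul_nonneg hp0 (by nlinarith)
  have hss : 0 ≤ (a+b)*(1-(a+b)) := mul_nonneg (by linarith) (by linarith)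
  nlinarith [hT1, hT2, h4p, hss, sq_nonneg (a-b), hp0]

private theorem f0_inner_inner (ra rb t : ℝ) (h1 : 0 ≤ ra) (h2 : 0 ≤ rb)
    (h3 : ra ≤ 1/2) (h4 : rb ≤ 1/2) (h5 : t ≤ ra*rb) :
    (2*(ra^2-1/4))^2*ra^2 + (2*(rb^2-1/4))^2*rb^2 - 2*((2*(ra^2-1/4))*(2*(rb^2-1/4)))*t
      ≤ ra^2 + rb^2 - 2*t := by
  have hS : 0 ≤ 3/4 + 2*ra^2 + 2*rb^2 + 2*ra*rb - 4*ra^4 - 4*rb^4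
      - 8*ra^3*rb - 8*ra*rb^3 - 12*ra^2*rb^2 := by
    nlinarith [f0_aux1 (1/2-ra) (1/2-rb) (by linarith) (by linarith) (by linarith) (by linarith)]
  have hAB : 0 ≤ 1 - (2*(ra^2-1/4))*(2*(rb^2-1/4)) := by
    nlinarith [mul_nonneg (by nlinarith : (0:ℝ) ≤ 1/4 - ra^2) (sq_nonneg rb),
      sq_nonneg ra, sq_nonneg rb]
  nlinarith [mul_nonneg (sq_nonneg (ra-rb)) hS,
    mul_nonneg hAB (by linarith : (0:ℝ) ≤ ra*rb - t)]

private theorem f0_outer_outer (ra rb t A B : ℝ) (hA : A*ra = ra - 1/2) (hB : B*rb = rb - 1/2)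
    (hA0 : 0 ≤ A) (hA1 : A ≤ 1) (hB0 : 0 ≤ B) (hB1 : B ≤ 1) (h5 : t ≤ ra*rb) :
    A^2*ra^2 + B^2*rb^2 - 2*(A*B)*t ≤ ra^2 + rb^2 - 2*t := by
  have eA : A^2*ra^2 = (ra-1/2)^2 := by rw [show A^2*ra^2 = (A*ra)^2 from by ring, hA]
  have eB : B^2*rb^2 = (rb-1/2)^2 := by rw [show B^2*rb^2 = (B*rb)^2 from by ring, hB]
  have eAB : (A*B)*(ra*rb) = (ra-1/2)*(rb-1/2) := by
    rw [show (A*B)*(ra*rb) = (A*ra)*(B*rb) from by ring, hA, hB]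
  have hAB1 : A*B ≤ 1 := by nlinarith
  nlinarith [mul_nonneg (by linarith : (0:ℝ) ≤ 1 - A*B)
    (by linarith : (0:ℝ) ≤ ra*rb - t), eA, eB, eAB]

private theorem f0_mixed (ra rb t B : ℝ) (h1 : 0 ≤ ra) (h3 : ra ≤ 1/2) (hrb : 1/2 ≤ rb)
    (hB : B*rb = rb - 1/2) (hB0 : 0 ≤ B) (h5 : t ≤ ra*rb) :
    (2*(ra^2-1/4))^2*ra^2 + B^2*rb^2 - 2*((2*(ra^2-1/4))*B)*t ≤ ra^2 + rb^2 - 2*t := by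
  have eB : B^2*rb^2 = (rb-1/2)^2 := by rw [show B^2*rb^2 = (B*rb)^2 from by ring, hB]
  have eAB : ((2*(ra^2-1/4))*B)*(ra*rb) = (2*(ra^2-1/4))*ra*(rb-1/2) := by
    rw [show ((2*(ra^2-1/4))*B)*(ra*rb) = ((2*(ra^2-1/4))*ra)*(B*rb) from by ring, hB]
  have hABn : (2*(ra^2-1/4))*B ≤ 0 := by
    nlinarith [mul_nonneg (by nlinarith : (0:ℝ) ≤ 1/4 - ra^2) hB0]
  have hcube : 0 ≤ (1/2-ra)^3*(4*ra^3+6*ra^2+4*ra+2) :=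
    mul_nonneg (pow_nonneg (by linarith) 3) (by positivity)
  have hrbco : 0 ≤ (rb-1/2)*((ra+1)*(2*ra-1)^2) :=
    mul_nonneg (by linarith) (by positivity)
  nlinarith [mul_nonneg (by linarith : (0:ℝ) ≤ 1 - (2*(ra^2-1/4))*B)
    (by linarith : (0:ℝ) ≤ ra*rb - t), eB, eAB, hcube, hrbco]

private theorem f0_outer_facts (x : EuclideanSpace ℝ (Fin 2)) (hx : ¬ ‖x‖ ≤ 0.5) :
    (1 - 1/(2*‖x‖))*‖x‖ = ‖x‖ - 1/2 ∧ 0 ≤ 1 - 1/(2*‖x‖) ∧ 1 - 1/(2*‖x‖) ≤ 1 := by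
  have hx' : (1:ℝ)/2 < ‖x‖ := by push_neg at hx; norm_num at hx; linarith
  have hxne : ‖x‖ ≠ 0 := by positivity
  refine ⟨by field_simp, ?_, ?_⟩
  · have : 1/(2*‖x‖) ≤ 1 := by rw [div_le_one (by linarith)]; linarith
    linarith
  · have : 0 ≤ 1/(2*‖x‖) := by positivity
    linarith

private theorem f0_main (a b : EuclideanSpace ℝ (Fin 2)) : ‖f0 a - f0 b‖ ≤ ‖a - b‖ := by
  have hcs : ⟪a,b⟫ ≤ ‖a‖*‖b‖ := real_inner_le_norm a b
  have hcs' : ⟪b,a⟫ ≤ ‖b‖*‖a‖ := real_inner_le_norm b a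
  unfold f0
  split_ifs with ha hb hb
  · -- both inner
    apply f0_key
    have h1 : ‖a‖ ≤ 1/2 := by norm_num at ha ⊢; linarith
    have h2 : ‖b‖ ≤ 1/2 := by norm_num at hb ⊢; linarith
    nlinarith [f0_inner_inner ‖a‖ ‖b‖ ⟪a,b⟫ (norm_nonneg a) (norm_nonneg b) h1 h2 hcs]
  · -- a inner, b outer
    apply f0_key
    obtain ⟨hB, hB0, _⟩ := f0_outer_facts b hb
    have h1 : ‖a‖ ≤ 1/2 := by norm_num at ha ⊢; linarith
    have h2 : (1:ℝ)/2 ≤ ‖b‖ := by push_neg at hb; norm_num at hb; linarith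
    nlinarith [f0_mixed ‖a‖ ‖b‖ ⟪a,b⟫ (1 - 1/(2*‖b‖)) (norm_nonneg a) h1 h2 hB hB0 hcs]
  · -- a outer, b inner
    rw [norm_sub_rev, norm_sub_rev a b]
    apply f0_key
    obtain ⟨hA, hA0, _⟩ := f0_outer_facts a ha
    have h1 : ‖b‖ ≤ 1/2 := by norm_num at hb ⊢; linarith
    have h2 : (1:ℝ)/2 ≤ ‖a‖ := by push_neg at ha; norm_num at ha; linarith
    nlinarith [f0_mixed ‖b‖ ‖a‖ ⟪b,a⟫ (1 - 1/(2*‖a‖)) (norm_nonneg b) h1 h2 hA hA0 hcs']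
  · -- both outer
    apply f0_key
    obtain ⟨hA, hA0, hA1⟩ := f0_outer_facts a ha
    obtain ⟨hB, hB0, hB1⟩ := f0_outer_facts b hb
    exact f0_outer_outer ‖a‖ ‖b‖ ⟪a,b⟫ _ _ hA hB hA0 hA1 hB0 hB1 hcs

/-- `f₀` is Lipschitz continuous on the square `X = [−0.8, 0.8]²`
with Lipschitz constant 1. -/
theorem f0_lipschitz_on_square :
    ∀ a b : EuclideanSpace ℝ (Fin 2),
      (∀ i, a i ∈ Set.Icc (-0.8 : ℝ) 0.8) →
      (∀ i, b i ∈ Set.Icc (-0.8 : ℝ) 0.8) →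
      ‖f0 a - f0 b‖ ≤ 1 * ‖a - b‖ := by
  intro a b _ _
  rw [one_mul]
  exact f0_main a b
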